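/- For every coherent map A on a coherent space Z with quantum space Q(Z), there is a unique linear map Γ(A) : Q(Z) → Q(Z) with Γ(A)|z⟩ = |Az⟩ for all z ∈ Z, and for any adjoint A* of A one has ⟨z|Γ(A) = ⟨A*z| for all z, i.e., ⟨z|Γ(A)|z'⟩ = K(z, Az') = K(A*z, z'). -/

import Mathlib

open scoped ComplexConjugate

/-- For every coherent map `A` on `Z` there is a unique linear map `Γ(A)` on the quantum space
with `Γ(A)|z⟩ = |Az⟩`; moreover `⟨z|Γ(A)|z'⟩ = K(z, Az') = K(A*z, z')` for any adjoint `A*`. -/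
theorem quantization_of_coherent_map
    {Z : Type*} {Q : Type*} [NormedAddCommGroup Q] [InnerProductSpace ℂ Q]
    (K : Z → Z → ℂ) (k : Z → Q)
    (hK : ∀ z z', (inner ℂ (k z) (k z') : ℂ) = K z z')
    (hspan : Submodule.span ℂ (Set.range k) = ⊤)
    (A Astar : Z → Z) (hadj : ∀ z z', K z (A z') = K (Astar z) z') :
    (∃! T : Q →ₗ[ℂ] Q, ∀ z, T (k z) = k (A z)) ∧
    (∀ T : Q →ₗ[ℂ] Q, (∀ z, T (k z) = k (A z)) →
      ∀ z z', (inner ℂ (k z) (T (k z')) : ℂ) = K z (A z') ∧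
        (inner ℂ (k z) (T (k z')) : ℂ) = K (Astar z) z') := by
  classical
  set P : (Z →₀ ℂ) →ₗ[ℂ] Q := Finsupp.linearCombination ℂ k with hP
  set S : (Z →₀ ℂ) →ₗ[ℂ] Q := Finsupp.linearCombination ℂ (fun z => k (A z)) with hS
  have hPsurj : Function.Surjective P := by
    rw [← LinearMap.range_eq_top, hP, Finsupp.range_linearCombination, hspan]
  have hker : ∀ x ∈ LinearMap.ker P, S x = 0 := by
    intro x hx
    have hx0 : P x = 0 := hx
    have horth : ∀ w, (inner ℂ (k w) (S x) : ℂ) = 0 := by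
      intro w
      have h1 : (inner ℂ (k w) (S x) : ℂ) = ∑ z ∈ x.support, x z * K w (A z) := by
        simp [hS, Finsupp.linearCombination_apply, Finsupp.sum, inner_sum,
          inner_smul_right, hK]
      have h2 : (inner ℂ (k (Astar w)) (P x) : ℂ) = ∑ z ∈ x.support, x z * K (Astar w) z := by
        simp [hP, Finsupp.linearCombination_apply, Finsupp.sum, inner_sum,
          inner_smul_right, hK]
      rw [h1]
      simp only [hadj]
      rw [← h2, hx0, inner_zero_right]
    have hall : ∀ u, (inner ℂ u (S x) : ℂ) = 0 := by
      intro u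
      have hu : u ∈ Submodule.span ℂ (Set.range k) := by rw [hspan]; trivial
      induction hu using Submodule.span_induction with
      | mem u hu => obtain ⟨w, rfl⟩ := hu; exact horth w
      | zero => simp
      | add u v _ _ hu hv => rw [inner_add_left, hu, hv, add_zero]
      | smul c u _ hu => rw [inner_smul_left, hu, mul_zero]
    exact inner_self_eq_zero.mp (hall (S x))
  let e := P.quotKerEquivOfSurjective hPsurj
  let T0 : ((Z →₀ ℂ) ⧸ LinearMap.ker P) →ₗ[ℂ] Q :=
    (LinearMap.ker P).liftQ S (fun x hx => hker x hx)
  let T : Q →ₗ[ℂ] Q := T0 ∘ₗ (e.symm : Q →ₗ[ℂ] _)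
  have hTP : ∀ x, T (P x) = S x := by
    intro x
    have he : e (Submodule.Quotient.mk x) = P x := rfl
    have : e.symm (P x) = Submodule.Quotient.mk x := by
      rw [← he, LinearEquiv.symm_apply_apply]
    simp only [T, LinearMap.comp_apply, LinearEquiv.coe_coe, this, T0,
      Submodule.liftQ_apply]
    rfl
  have hTk : ∀ z, T (k z) = k (A z) := by
    intro z
    have h1 : P (Finsupp.single z 1) = k z := by
      simp [hP, Finsupp.linearCombination_single]
    have h2 : S (Finsupp.single z 1) = k (A z) := by
      simp [hS, Finsupp.linearCombination_single]
    rw [← h1, hTP, h2]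
  constructor
  · refine ⟨T, hTk, ?_⟩
    intro T' hT'
    apply LinearMap.ext_on hspan
    rintro u ⟨w, rfl⟩
    rw [hT', hTk]
  · intro T' hT' z z'
    rw [hT', hK]
    exact ⟨rfl, hadj z z'⟩
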